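/- For n ≥ 3, the n-ary form p_n(x_1,…,x_n) = 4 Σ_j x_j^4 - 17 Σ_{i<j} x_i^2 x_j^2 is irreducible over ℝ. -/

import Mathlib

open MvPolynomial Finset

noncomputable def pn (n : ℕ) : MvPolynomial (Fin n) ℝ :=
  4 * ∑ j, X j ^ 4
    - 17 * ∑ i, ∑ j ∈ univ.filter (fun j => i < j), X i ^ 2 * X j ^ 2

set_option linter.unusedSectionVars false

section RealLemmas

/-- A binary quartic factorization forcing vanishing cross terms. -/
private lemma bin_cross {A B C D E F : ℝ}
    (H : ∀ s u : ℝ, (A*s^2 + B*s*u + C*u^2) * (D*s^2 + E*s*u + F*u^2)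
      = -9*s^4 - 34*s^2*u^2 + 4*u^4) : B = 0 ∧ E = 0 := by
  have h0 : A * D = -9 := by linear_combination H 1 0
  have h4 : C * F = 4 := by linear_combination H 0 1
  have e1 : A*E + B*D = 0 := by
    linear_combination (2/3) * H 1 1 - (2/3) * H 1 (-1) - (1/12) * H 1 2 + (1/12) * H 1 (-2)
  have e3 : B*F + C*E = 0 := by
    linear_combination (1/12) * H 1 2 - (1/12) * H 1 (-2) - (1/6) * H 1 1 + (1/6) * H 1 (-1)
  have key : A*F - C*D ≠ 0 := by
    intro h
    nlinarith [sq_nonneg (A*F), sq_nonneg (C*D)]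
  constructor
  · have hB : B * (A*F - C*D) = 0 := by linear_combination A * e3 - C * e1
    rcases mul_eq_zero.mp hB with h | h
    · exact h
    · exact absurd h key
  · have hE : E * (A*F - C*D) = 0 := by linear_combination F * e1 - D * e3
    rcases mul_eq_zero.mp hE with h | h
    · exact h
    · exact absurd h key

private lemma lin_contra {a b c : ℝ} (ha : a ≠ 0) (hb : b ≠ 0) (hc : c ≠ 0)
    (h1 : 4*b^4 + 4*a^4 - 17*a^2*b^2 = 0)
    (h2 : 4*c^4 + 4*a^4 - 17*a^2*c^2 = 0)
    (h3 : 4*c^4 + 4*b^4 - 17*b^2*c^2 = 0) : False := by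
  have hx : (0:ℝ) < a^2 := by positivity
  have hy : (0:ℝ) < b^2 := by positivity
  have hz : (0:ℝ) < c^2 := by positivity
  have f1 : (b^2 - 4*a^2) * (4*b^2 - a^2) = 0 := by linear_combination h1
  have f2 : (c^2 - 4*a^2) * (4*c^2 - a^2) = 0 := by linear_combination h2
  have f3 : (c^2 - 4*b^2) * (4*c^2 - b^2) = 0 := by linear_combination h3
  rcases mul_eq_zero.mp f1 with g1 | g1 <;>
  rcases mul_eq_zero.mp f2 with g2 | g2 <;>
  rcases mul_eq_zero.mp f3 with g3 | g3 <;> nlinarith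

private lemma diag_contra {a1 a2 a3 c1 c2 c3 : ℝ}
    (h1 : a1*c1 = 4) (h2 : a2*c2 = 4) (h3 : a3*c3 = 4)
    (e12 : a1*c2 + a2*c1 = -17) (e13 : a1*c3 + a3*c1 = -17)
    (e23 : a2*c3 + a3*c2 = -17) : False := by
  have q12 : (a1*c2 + 1) * (a1*c2 + 16) = 0 := by
    linear_combination (a1*c2)*e12 - (a2*c2)*h1 - 4*h2
  have q23 : (a2*c3 + 1) * (a2*c3 + 16) = 0 := by
    linear_combination (a2*c3)*e23 - (a3*c3)*h2 - 4*h3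
  have q13 : (a3*c1 + 1) * (a3*c1 + 16) = 0 := by
    linear_combination (a3*c1)*e13 - (a1*c1)*h3 - 4*h1
  have hprod : (a1*c2) * (a2*c3) * (a3*c1) = 64 := by
    linear_combination (a2*c2*a3*c3)*h1 + (4*a3*c3)*h2 + 16*h3
  have hx : a1*c2 < 0 := by nlinarith [q12]
  have hy : a2*c3 < 0 := by nlinarith [q23]
  have hz : a3*c1 < 0 := by nlinarith [q13]
  nlinarith [mul_pos (mul_pos (neg_pos.mpr hx) (neg_pos.mpr hy)) (neg_pos.mpr hz), hprod]

end RealLemmas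

section Homog

variable {σ : Type*} [Fintype σ] [DecidableEq σ]

private lemma degree_eq_sum_fintype (d : σ →₀ ℕ) : d.degree = ∑ i, d i :=
  Finset.sum_subset (Finset.subset_univ _) (fun i _ hi => Finsupp.notMem_support_iff.mp hi)

private lemma degree_add_fintype (u v : σ →₀ ℕ) : (u + v).degree = u.degree + v.degree := by
  simp [degree_eq_sum_fintype, Finset.sum_add_distrib]

private lemma comp_mul_of_lower {f g : MvPolynomial σ ℝ} {a b : ℕ}
    (hfa : ∀ u : σ →₀ ℕ, coeff u f ≠ 0 → a ≤ u.degree)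
    (hgb : ∀ v : σ →₀ ℕ, coeff v g ≠ 0 → b ≤ v.degree) :
    homogeneousComponent (a + b) (f * g)
      = homogeneousComponent a f * homogeneousComponent b g := by
  ext d
  rw [coeff_homogeneousComponent, coeff_mul, coeff_mul]
  by_cases hd : d.degree = a + b
  · rw [if_pos hd]
    apply Finset.sum_congr rfl
    intro x hx
    have hxd : x.1 + x.2 = d := Finset.HasAntidiagonal.mem_antidiagonal.mp hx
    rw [coeff_homogeneousComponent, coeff_homogeneousComponent]
    by_cases h1 : coeff x.1 f = 0
    · simp [h1]
    by_cases h2 : coeff x.2 g = 0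
    · simp [h2]
    have ha' : a ≤ x.1.degree := hfa _ h1
    have hb' : b ≤ x.2.degree := hgb _ h2
    have hsum : x.1.degree + x.2.degree = a + b := by
      rw [← degree_add_fintype, hxd, hd]
    rw [if_pos (by omega), if_pos (by omega)]
  · rw [if_neg hd]
    symm; apply Finset.sum_eq_zero
    intro x hx
    rw [coeff_homogeneousComponent, coeff_homogeneousComponent]
    by_cases h1 : x.1.degree = a
    · by_cases h2 : x.2.degree = b
      · exact absurd (by rw [← Finset.HasAntidiagonal.mem_antidiagonal.mp hx, degree_add_fintype, h1, h2]) hd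
      · rw [if_neg h2, mul_zero]
    · rw [if_neg h1, zero_mul]

private lemma comp_mul_of_upper {f g : MvPolynomial σ ℝ} {a b : ℕ}
    (hfa : ∀ u : σ →₀ ℕ, coeff u f ≠ 0 → u.degree ≤ a)
    (hgb : ∀ v : σ →₀ ℕ, coeff v g ≠ 0 → v.degree ≤ b) :
    homogeneousComponent (a + b) (f * g)
      = homogeneousComponent a f * homogeneousComponent b g := by
  ext d
  rw [coeff_homogeneousComponent, coeff_mul, coeff_mul]
  by_cases hd : d.degree = a + b
  · rw [if_pos hd]
    apply Finset.sum_congr rfl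
    intro x hx
    have hxd : x.1 + x.2 = d := Finset.HasAntidiagonal.mem_antidiagonal.mp hx
    rw [coeff_homogeneousComponent, coeff_homogeneousComponent]
    by_cases h1 : coeff x.1 f = 0
    · simp [h1]
    by_cases h2 : coeff x.2 g = 0
    · simp [h2]
    have ha' : x.1.degree ≤ a := hfa _ h1
    have hb' : x.2.degree ≤ b := hgb _ h2
    have hsum : x.1.degree + x.2.degree = a + b := by
      rw [← degree_add_fintype, hxd, hd]
    rw [if_pos (by omega), if_pos (by omega)]
  · rw [if_neg hd]
    symm; apply Finset.sum_eq_zero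
    intro x hx
    rw [coeff_homogeneousComponent, coeff_homogeneousComponent]
    by_cases h1 : x.1.degree = a
    · by_cases h2 : x.2.degree = b
      · exact absurd (by rw [← Finset.HasAntidiagonal.mem_antidiagonal.mp hx, degree_add_fintype, h1, h2]) hd
      · rw [if_neg h2, mul_zero]
    · rw [if_neg h1, zero_mul]

private lemma comp_ne_zero_of_mem {f : MvPolynomial σ ℝ} {d : σ →₀ ℕ} (hd : d ∈ f.support) :
    homogeneousComponent d.degree f ≠ 0 := by
  intro h0
  have hc : coeff d (homogeneousComponent d.degree f) = coeff d f := by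
    rw [coeff_homogeneousComponent, if_pos rfl]
  rw [h0, coeff_zero] at hc
  exact mem_support_iff.mp hd hc.symm

/-- Factors of a nonzero homogeneous polynomial (over a domain) are homogeneous. -/
private lemma homog_factor {f g : MvPolynomial σ ℝ} {n : ℕ} (hf : f ≠ 0) (hg : g ≠ 0)
    (h : (f * g).IsHomogeneous n) :
    ∃ a b : ℕ, a + b = n ∧ f.IsHomogeneous a ∧ g.IsHomogeneous b := by
  obtain ⟨df, hdf, hdfmin⟩ :=
    Finset.exists_min_image f.support Finsupp.degree (support_nonempty.mpr hf)
  obtain ⟨dg, hdg, hdgmin⟩ :=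
    Finset.exists_min_image g.support Finsupp.degree (support_nonempty.mpr hg)
  obtain ⟨Df, hDf, hDfmax⟩ :=
    Finset.exists_max_image f.support Finsupp.degree (support_nonempty.mpr hf)
  obtain ⟨Dg, hDg, hDgmax⟩ :=
    Finset.exists_max_image g.support Finsupp.degree (support_nonempty.mpr hg)
  set a := df.degree with hadef
  set b := dg.degree with hbdef
  set A := Df.degree with hAdef
  set B := Dg.degree with hBdef
  have hmem : f * g ∈ homogeneousSubmodule σ ℝ n := h
  have hlowne : homogeneousComponent a f * homogeneousComponent b g ≠ 0 :=
    mul_ne_zero (comp_ne_zero_of_mem hdf) (comp_ne_zero_of_mem hdg)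
  have hupne : homogeneousComponent A f * homogeneousComponent B g ≠ 0 :=
    mul_ne_zero (comp_ne_zero_of_mem hDf) (comp_ne_zero_of_mem hDg)
  have hab : a + b = n := by
    by_contra hne
    apply hlowne
    rw [← comp_mul_of_lower
      (fun u hu => hdfmin u (mem_support_iff.mpr hu))
      (fun v hv => hdgmin v (mem_support_iff.mpr hv)),
      homogeneousComponent_of_mem hmem, if_neg hne]
  have hAB : A + B = n := by
    by_contra hne
    apply hupne
    rw [← comp_mul_of_upper
      (fun u hu => hDfmax u (mem_support_iff.mpr hu))
      (fun v hv => hDgmax v (mem_support_iff.mpr hv)),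
      homogeneousComponent_of_mem hmem, if_neg hne]
  have haA : a ≤ A := hdfmin Df hDf
  have hbB : b ≤ B := hdgmin Dg hDg
  have haa : a = A := by omega
  have hbb : b = B := by omega
  refine ⟨a, b, hab, ?_, ?_⟩
  · have hfa : f = homogeneousComponent a f := by
      ext d
      rw [coeff_homogeneousComponent]
      by_cases hd : d.degree = a
      · rw [if_pos hd]
      · rw [if_neg hd]
        by_contra hc
        have hmem' : d ∈ f.support := mem_support_iff.mpr hc
        have := hdfmin d hmem'
        have := hDfmax d hmem'
        omega
    rw [hfa]; exact homogeneousComponent_isHomogeneous a f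
  · have hgb : g = homogeneousComponent b g := by
      ext d
      rw [coeff_homogeneousComponent]
      by_cases hd : d.degree = b
      · rw [if_pos hd]
      · rw [if_neg hd]
        by_contra hc
        have hmem' : d ∈ g.support := mem_support_iff.mpr hc
        have := hdgmin d hmem'
        have := hDgmax d hmem'
        omega
    rw [hgb]; exact homogeneousComponent_isHomogeneous b g

private lemma not_isUnit_of_homog {p : MvPolynomial σ ℝ} {m : ℕ} (hp : p.IsHomogeneous m)
    (hm : m ≠ 0) (hp0 : p ≠ 0) : ¬ IsUnit p := by
  intro hu
  obtain ⟨v, hv⟩ := IsUnit.exists_right_inv hu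
  have hv0 : v ≠ 0 := by
    intro h; rw [h, mul_zero] at hv; exact one_ne_zero hv.symm
  have h1 : (p * v).IsHomogeneous 0 := by rw [hv]; exact isHomogeneous_one σ ℝ
  obtain ⟨a, b, hab, hpa, -⟩ := homog_factor hp0 hv0 h1
  have ha0 : a = 0 := by omega
  rw [ha0] at hpa
  exact hm (hpa.inj_right hp hp0).symm

private lemma isUnit_of_homog_zero {p : MvPolynomial σ ℝ} (hp : p.IsHomogeneous 0)
    (hp0 : p ≠ 0) : IsUnit p := by
  have hrep : p = C (coeff 0 p) := by
    ext d
    rw [coeff_C]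
    by_cases hd : d = 0
    · rw [if_pos hd.symm, hd]
    · rw [if_neg (fun h => hd h.symm)]
      apply hp.coeff_eq_zero
      rw [Ne, Finsupp.degree_eq_zero_iff]
      exact hd
  have hc0 : coeff 0 p ≠ 0 := by
    intro h
    apply hp0
    rw [hrep, h, map_zero]
  rw [hrep]
  exact (isUnit_iff_ne_zero.mpr hc0).map C

end Homog

section Rep

private lemma fne {d e : Fin 3 →₀ ℕ} (i : Fin 3) (h : d i ≠ e i) : d ≠ e :=
  fun hde => h (by rw [hde])

private lemma fin3_deg1 (d : Fin 3 →₀ ℕ) (h : d.degree = 1) :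
    d = Finsupp.single 0 1 ∨ d = Finsupp.single 1 1 ∨ d = Finsupp.single 2 1 := by
  have hsum : d 0 + d 1 + d 2 = 1 := by
    rw [← Fin.sum_univ_three (fun i => d i), ← h]
    exact (Finset.sum_subset (Finset.subset_univ _)
      (fun i _ hi => Finsupp.notMem_support_iff.mp hi)).symm
  have : (d 0 = 1 ∧ d 1 = 0 ∧ d 2 = 0) ∨ (d 0 = 0 ∧ d 1 = 1 ∧ d 2 = 0)
      ∨ (d 0 = 0 ∧ d 1 = 0 ∧ d 2 = 1) := by omega
  rcases this with ⟨h0, h1, h2⟩ | ⟨h0, h1, h2⟩ | ⟨h0, h1, h2⟩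
  · left; ext i; fin_cases i <;> simp_all [Finsupp.single_apply]
  · right; left; ext i; fin_cases i <;> simp_all [Finsupp.single_apply]
  · right; right; ext i; fin_cases i <;> simp_all [Finsupp.single_apply]

private lemma fin3_deg2 (d : Fin 3 →₀ ℕ) (h : d.degree = 2) :
    d = Finsupp.single 0 2 ∨ d = Finsupp.single 1 2 ∨ d = Finsupp.single 2 2
    ∨ d = Finsupp.single 0 1 + Finsupp.single 1 1
    ∨ d = Finsupp.single 0 1 + Finsupp.single 2 1
    ∨ d = Finsupp.single 1 1 + Finsupp.single 2 1 := by
  have hsum : d 0 + d 1 + d 2 = 2 := by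
    rw [← Fin.sum_univ_three (fun i => d i), ← h]
    exact (Finset.sum_subset (Finset.subset_univ _)
      (fun i _ hi => Finsupp.notMem_support_iff.mp hi)).symm
  have : (d 0 = 2 ∧ d 1 = 0 ∧ d 2 = 0) ∨ (d 0 = 0 ∧ d 1 = 2 ∧ d 2 = 0)
      ∨ (d 0 = 0 ∧ d 1 = 0 ∧ d 2 = 2) ∨ (d 0 = 1 ∧ d 1 = 1 ∧ d 2 = 0)
      ∨ (d 0 = 1 ∧ d 1 = 0 ∧ d 2 = 1) ∨ (d 0 = 0 ∧ d 1 = 1 ∧ d 2 = 1) := by omega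
  rcases this with ⟨h0, h1, h2⟩ | ⟨h0, h1, h2⟩ | ⟨h0, h1, h2⟩ | ⟨h0, h1, h2⟩ | ⟨h0, h1, h2⟩ | ⟨h0, h1, h2⟩
  · left; ext i; fin_cases i <;> simp_all [Finsupp.single_apply]
  · right; left; ext i; fin_cases i <;> simp_all [Finsupp.single_apply]
  · right; right; left; ext i; fin_cases i <;> simp_all [Finsupp.single_apply]
  · right; right; right; left; ext i; fin_cases i <;> simp_all [Finsupp.single_apply]
  · right; right; right; right; left; ext i; fin_cases i <;> simp_all [Finsupp.single_apply]
  · right; right; right; right; right; ext i; fin_cases i <;> simp_all [Finsupp.single_apply]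

private lemma hom1_rep {f : MvPolynomial (Fin 3) ℝ} (hf : f.IsHomogeneous 1) :
    ∃ a b c : ℝ, ∀ x y z : ℝ, eval ![x, y, z] f = a*x + b*y + c*z := by
  refine ⟨coeff (Finsupp.single 0 1) f, coeff (Finsupp.single 1 1) f,
    coeff (Finsupp.single 2 1) f, ?_⟩
  intro x y z
  have hrep : f = monomial (Finsupp.single 0 1) (coeff (Finsupp.single 0 1) f)
      + monomial (Finsupp.single 1 1) (coeff (Finsupp.single 1 1) f)
      + monomial (Finsupp.single 2 1) (coeff (Finsupp.single 2 1) f) := by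
    ext d
    rw [coeff_add, coeff_add, coeff_monomial, coeff_monomial, coeff_monomial]
    by_cases h0 : d = Finsupp.single 0 1
    · subst h0
      rw [if_pos rfl, if_neg (fne 0 (by simp)), if_neg (fne 0 (by simp))]; ring
    by_cases h1 : d = Finsupp.single 1 1
    · subst h1
      rw [if_pos rfl, if_neg (fne 1 (by simp)), if_neg (fne 1 (by simp))]; ring
    by_cases h2 : d = Finsupp.single 2 1
    · subst h2
      rw [if_pos rfl, if_neg (fne 2 (by simp)), if_neg (fne 2 (by simp))]; ring
    rw [if_neg (Ne.symm h0), if_neg (Ne.symm h1), if_neg (Ne.symm h2)]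
    by_contra hc
    have hc' : coeff d f ≠ 0 := by simpa using hc
    have hdeg : d.degree = 1 := by
      by_contra hne; exact hc' (hf.coeff_eq_zero hne)
    rcases fin3_deg1 d hdeg with h | h | h <;> simp_all
  have m1 : ∀ (i : Fin 3) (c : ℝ), monomial (Finsupp.single i 1) c = C c * X i := by
    intro i c; rw [C_mul_X_eq_monomial]
  conv_lhs => rw [hrep, m1, m1, m1]
  simp only [map_add, map_mul, eval_C, eval_X, Matrix.cons_val_zero,
    Matrix.cons_val_one, Matrix.head_cons, Matrix.cons_val_two, Matrix.tail_cons]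

private lemma hom2_rep {f : MvPolynomial (Fin 3) ℝ} (hf : f.IsHomogeneous 2) :
    ∃ a1 a2 a3 a12 a13 a23 : ℝ, ∀ x y z : ℝ,
      eval ![x, y, z] f
        = a1*x^2 + a2*y^2 + a3*z^2 + a12*x*y + a13*x*z + a23*y*z := by
  refine ⟨coeff (Finsupp.single 0 2) f, coeff (Finsupp.single 1 2) f,
    coeff (Finsupp.single 2 2) f,
    coeff (Finsupp.single 0 1 + Finsupp.single 1 1) f,
    coeff (Finsupp.single 0 1 + Finsupp.single 2 1) f,
    coeff (Finsupp.single 1 1 + Finsupp.single 2 1) f, ?_⟩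
  intro x y z
  have hrep : f = monomial (Finsupp.single 0 2) (coeff (Finsupp.single 0 2) f)
      + monomial (Finsupp.single 1 2) (coeff (Finsupp.single 1 2) f)
      + monomial (Finsupp.single 2 2) (coeff (Finsupp.single 2 2) f)
      + monomial (Finsupp.single 0 1 + Finsupp.single 1 1)
          (coeff (Finsupp.single 0 1 + Finsupp.single 1 1) f)
      + monomial (Finsupp.single 0 1 + Finsupp.single 2 1)
          (coeff (Finsupp.single 0 1 + Finsupp.single 2 1) f)
      + monomial (Finsupp.single 1 1 + Finsupp.single 2 1)
          (coeff (Finsupp.single 1 1 + Finsupp.single 2 1) f) := by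
    ext d
    simp only [coeff_add, coeff_monomial]
    by_cases h0 : d = Finsupp.single 0 2
    · subst h0
      rw [if_pos rfl, if_neg (fne 0 (by simp)), if_neg (fne 0 (by simp)),
        if_neg (fne 1 (by simp)), if_neg (fne 2 (by simp)), if_neg (fne 0 (by simp))]
      ring
    by_cases h1 : d = Finsupp.single 1 2
    · subst h1
      rw [if_neg (fne 1 (by simp)), if_pos rfl, if_neg (fne 1 (by simp)),
        if_neg (fne 0 (by simp)), if_neg (fne 2 (by simp)), if_neg (fne 1 (by simp))]
      ring
    by_cases h2 : d = Finsupp.single 2 2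
    · subst h2
      rw [if_neg (fne 2 (by simp)), if_neg (fne 2 (by simp)), if_pos rfl,
        if_neg (fne 2 (by simp)), if_neg (fne 2 (by simp)), if_neg (fne 2 (by simp))]
      ring
    by_cases h3 : d = Finsupp.single 0 1 + Finsupp.single 1 1
    · subst h3
      rw [if_neg (fne 0 (by simp)), if_neg (fne 1 (by simp)), if_neg (fne 0 (by simp)),
        if_pos rfl, if_neg (fne 1 (by simp)), if_neg (fne 0 (by simp))]
      ring
    by_cases h4 : d = Finsupp.single 0 1 + Finsupp.single 2 1
    · subst h4
      rw [if_neg (fne 0 (by simp)), if_neg (fne 2 (by simp)), if_neg (fne 0 (by simp)),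
        if_neg (fne 1 (by simp)), if_pos rfl, if_neg (fne 0 (by simp))]
      ring
    by_cases h5 : d = Finsupp.single 1 1 + Finsupp.single 2 1
    · subst h5
      rw [if_neg (fne 1 (by simp)), if_neg (fne 2 (by simp)), if_neg (fne 1 (by simp)),
        if_neg (fne 2 (by simp)), if_neg (fne 1 (by simp)), if_pos rfl]
      ring
    rw [if_neg (Ne.symm h0), if_neg (Ne.symm h1), if_neg (Ne.symm h2),
      if_neg (Ne.symm h3), if_neg (Ne.symm h4), if_neg (Ne.symm h5)]
    by_contra hc
    have hc' : coeff d f ≠ 0 := by simpa using hc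
    have hdeg : d.degree = 2 := by
      by_contra hne; exact hc' (hf.coeff_eq_zero hne)
    rcases fin3_deg2 d hdeg with h | h | h | h | h | h <;> simp_all
  have m2 : ∀ (i : Fin 3) (c : ℝ), monomial (Finsupp.single i 2) c = C c * X i ^ 2 := by
    intro i c; rw [C_mul_X_pow_eq_monomial]
  have m11 : ∀ (i j : Fin 3) (c : ℝ),
      monomial (Finsupp.single i 1 + Finsupp.single j 1) c = C c * (X i * X j) := by
    intro i j c; rw [X, X, monomial_mul, C_mul_monomial, one_mul, mul_one]
  conv_lhs => rw [hrep, m2, m2, m2, m11, m11, m11]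
  simp only [map_add, map_mul, map_pow, eval_C, eval_X, Matrix.cons_val_zero,
    Matrix.cons_val_one, Matrix.head_cons, Matrix.cons_val_two, Matrix.tail_cons]
  ring

end Rep

section PnFacts

private lemma pn3_eval (x y z : ℝ) : eval ![x, y, z] (pn 3)
    = 4*(x^4 + y^4 + z^4) - 17*(x^2*y^2 + x^2*z^2 + y^2*z^2) := by
  rw [pn]
  simp only [Finset.sum_filter, Fin.sum_univ_three]
  norm_num [Fin.lt_def, Matrix.cons_val_two, Matrix.tail_cons, Matrix.head_cons]

private lemma pn_homog (n : ℕ) : (pn n).IsHomogeneous 4 := by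
  have h4 : (4 : MvPolynomial (Fin n) ℝ) = C 4 := (map_ofNat C 4).symm
  have h17 : (17 : MvPolynomial (Fin n) ℝ) = C 17 := (map_ofNat C 17).symm
  rw [pn, h4, h17]
  apply MvPolynomial.IsHomogeneous.sub
  · exact MvPolynomial.IsHomogeneous.C_mul
      (MvPolynomial.IsHomogeneous.sum _ _ _ (fun j _ => isHomogeneous_X_pow j 4)) 4
  · refine MvPolynomial.IsHomogeneous.C_mul
      (MvPolynomial.IsHomogeneous.sum _ _ _ (fun i _ => ?_)) 17
    refine MvPolynomial.IsHomogeneous.sum _ _ _ (fun j _ => ?_)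
    simpa using (isHomogeneous_X_pow i 2).mul (isHomogeneous_X_pow j 2)

private lemma pn3_ne_zero : pn 3 ≠ 0 := by
  intro h
  have h4 : eval ![(1:ℝ), 0, 0] (pn 3) = 4 := by rw [pn3_eval]; norm_num
  rw [h, map_zero] at h4
  norm_num at h4

end PnFacts

section Kill

variable {n : ℕ}

private noncomputable def killq (n : ℕ) : Fin n → MvPolynomial (Fin 3) ℝ :=
  fun i => if h : (i : ℕ) < 3 then X ⟨i.1, h⟩ else 0

private lemma killq_castLE (hn : 3 ≤ n) (a : Fin 3) : killq n (Fin.castLE hn a) = X a := by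
  have h : ((Fin.castLE hn a : Fin n) : ℕ) < 3 := a.isLt
  rw [killq, dif_pos h]
  congr 1

private lemma killq_homog (i : Fin n) : (killq n i).IsHomogeneous 1 := by
  rw [killq]
  split
  · exact isHomogeneous_X _ _
  · exact isHomogeneous_zero _ _ 1

private lemma map_filter_univ (hn : 3 ≤ n) :
    (univ : Finset (Fin 3)).map (Fin.castLEEmb hn)
      = univ.filter (fun i : Fin n => (i : ℕ) < 3) := by
  ext i
  simp only [Finset.mem_map, Finset.mem_univ, true_and, Finset.mem_filter,
    Fin.castLEEmb_apply]
  constructor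
  · rintro ⟨a, rfl⟩; exact a.isLt
  · intro h; exact ⟨⟨i.1, h⟩, by ext; simp⟩

private lemma map_filter_lt (hn : 3 ≤ n) (i' : Fin 3) :
    (univ.filter (fun j : Fin 3 => i' < j)).map (Fin.castLEEmb hn)
      = univ.filter (fun j : Fin n => Fin.castLE hn i' < j ∧ (j : ℕ) < 3) := by
  ext j
  simp only [Finset.mem_map, Finset.mem_filter, Finset.mem_univ, true_and,
    Fin.castLEEmb_apply]
  constructor
  · rintro ⟨a, ha, rfl⟩
    refine ⟨?_, a.isLt⟩
    rw [Fin.lt_def] at ha ⊢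
    exact ha
  · rintro ⟨hlt, h3⟩
    refine ⟨⟨j.1, h3⟩, ?_, by ext; simp⟩
    rw [Fin.lt_def] at hlt ⊢
    exact hlt

private lemma pn_transfer (hn : 3 ≤ n) : aeval (killq n) (pn n) = pn 3 := by
  rw [pn, pn, map_sub, map_mul, map_mul, map_sum, map_sum]
  have h4 : aeval (killq n) (4 : MvPolynomial (Fin n) ℝ) = 4 := by
    rw [show (4 : MvPolynomial (Fin n) ℝ) = C 4 from (map_ofNat C 4).symm, aeval_C,
      algebraMap_eq, map_ofNat]
  have h17 : aeval (killq n) (17 : MvPolynomial (Fin n) ℝ) = 17 := by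
    rw [show (17 : MvPolynomial (Fin n) ℝ) = C 17 from (map_ofNat C 17).symm, aeval_C,
      algebraMap_eq, map_ofNat]
  rw [h4, h17]
  congr 1
  · congr 1
    have step1 : ∑ j : Fin n, aeval (killq n) ((X j : MvPolynomial (Fin n) ℝ) ^ 4)
        = ∑ j ∈ univ.filter (fun j : Fin n => (j : ℕ) < 3), (killq n j) ^ 4 := by
      calc ∑ j : Fin n, aeval (killq n) ((X j : MvPolynomial (Fin n) ℝ) ^ 4)
            = ∑ j : Fin n, (killq n j) ^ 4 :=
            Finset.sum_congr rfl (fun j _ => by rw [map_pow, aeval_X])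
        _ = ∑ j ∈ univ.filter (fun j : Fin n => (j : ℕ) < 3), (killq n j) ^ 4 := by
            refine (Finset.sum_subset (Finset.filter_subset _ _) ?_).symm
            intro x _ hx
            have : ¬ ((x : ℕ) < 3) := by simpa using hx
            rw [killq, dif_neg this, zero_pow (by norm_num)]
    rw [step1, ← map_filter_univ hn, Finset.sum_map]
    exact Finset.sum_congr rfl (fun a _ => by
      rw [Fin.castLEEmb_apply, killq_castLE hn])
  · congr 1
    have step1 : ∑ i : Fin n, aeval (killq n)
          (∑ j ∈ univ.filter (fun j => i < j), (X i : MvPolynomial (Fin n) ℝ) ^ 2 * X j ^ 2)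
        = ∑ i ∈ univ.filter (fun i : Fin n => (i : ℕ) < 3),
            ∑ j ∈ univ.filter (fun j : Fin n => i < j ∧ (j : ℕ) < 3),
              (killq n i) ^ 2 * (killq n j) ^ 2 := by
      calc ∑ i : Fin n, aeval (killq n)
              (∑ j ∈ univ.filter (fun j => i < j), (X i : MvPolynomial (Fin n) ℝ) ^ 2 * X j ^ 2)
          = ∑ i : Fin n, ∑ j ∈ univ.filter (fun j => i < j),
              (killq n i) ^ 2 * (killq n j) ^ 2 := by
            refine Finset.sum_congr rfl (fun i _ => ?_)
            rw [map_sum]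
            exact Finset.sum_congr rfl (fun j _ => by
              rw [map_mul, map_pow, map_pow, aeval_X, aeval_X])
        _ = ∑ i ∈ univ.filter (fun i : Fin n => (i : ℕ) < 3),
              ∑ j ∈ univ.filter (fun j => i < j),
                (killq n i) ^ 2 * (killq n j) ^ 2 := by
            refine (Finset.sum_subset (Finset.filter_subset _ _) ?_).symm
            intro x _ hx
            have hx3 : ¬ ((x : ℕ) < 3) := by simpa using hx
            apply Finset.sum_eq_zero
            intro j _
            rw [show killq n x = 0 from dif_neg hx3, zero_pow (by norm_num), zero_mul]
        _ = ∑ i ∈ univ.filter (fun i : Fin n => (i : ℕ) < 3),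
              ∑ j ∈ univ.filter (fun j : Fin n => i < j ∧ (j : ℕ) < 3),
                (killq n i) ^ 2 * (killq n j) ^ 2 := by
            refine Finset.sum_congr rfl (fun i _ => ?_)
            refine (Finset.sum_subset ?_ ?_).symm
            · intro x hx
              simp only [Finset.mem_filter, Finset.mem_univ, true_and] at hx ⊢
              exact hx.1
            · intro x hx hx'
              simp only [Finset.mem_filter, Finset.mem_univ, true_and, not_and] at hx hx'
              have : ¬ ((x : ℕ) < 3) := hx' hx
              rw [show killq n x = 0 from dif_neg this, zero_pow (by norm_num), mul_zero]
    rw [step1, ← map_filter_univ hn, Finset.sum_map]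
    apply Finset.sum_congr rfl
    intro a _
    rw [Fin.castLEEmb_apply, ← map_filter_lt hn, Finset.sum_map]
    apply Finset.sum_congr rfl
    intro b _
    rw [Fin.castLEEmb_apply, killq_castLE hn, killq_castLE hn]

end Kill

section P3

private lemma no_lin_factor {f g : MvPolynomial (Fin 3) ℝ} (hf : f.IsHomogeneous 1)
    (hfg : pn 3 = f * g) : False := by
  obtain ⟨a, b, c, hrep⟩ := hom1_rep hf
  have H : ∀ x y z : ℝ, (a*x + b*y + c*z) * eval ![x,y,z] g
      = 4*(x^4+y^4+z^4) - 17*(x^2*y^2+x^2*z^2+y^2*z^2) := by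
    intro x y z
    rw [← hrep x y z, ← map_mul, ← hfg, pn3_eval]
  have ha : a ≠ 0 := by
    intro h0; have := H 1 0 0; rw [h0] at this; norm_num at this
  have hb : b ≠ 0 := by
    intro h0; have := H 0 1 0; rw [h0] at this; norm_num at this
  have hc : c ≠ 0 := by
    intro h0; have := H 0 0 1; rw [h0] at this; norm_num at this
  have h1 : 4*b^4 + 4*a^4 - 17*a^2*b^2 = 0 := by
    have hH := H (-b) a 0
    have h0 : a*(-b) + b*a + c*0 = 0 := by ring
    rw [h0, zero_mul] at hH
    linear_combination -hH
  have h2 : 4*c^4 + 4*a^4 - 17*a^2*c^2 = 0 := by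
    have hH := H (-c) 0 a
    have h0 : a*(-c) + b*0 + c*a = 0 := by ring
    rw [h0, zero_mul] at hH
    linear_combination -hH
  have h3 : 4*c^4 + 4*b^4 - 17*b^2*c^2 = 0 := by
    have hH := H 0 (-c) b
    have h0 : a*0 + b*(-c) + c*b = 0 := by ring
    rw [h0, zero_mul] at hH
    linear_combination -hH
  exact lin_contra ha hb hc h1 h2 h3

private lemma no_quad_factor {f g : MvPolynomial (Fin 3) ℝ} (hf : f.IsHomogeneous 2)
    (hg : g.IsHomogeneous 2) (hfg : pn 3 = f * g) : False := by
  obtain ⟨a1, a2, a3, a12, a13, a23, hrepf⟩ := hom2_rep hf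
  obtain ⟨c1, c2, c3, c12, c13, c23, hrepg⟩ := hom2_rep hg
  have H : ∀ x y z : ℝ,
      (a1*x^2 + a2*y^2 + a3*z^2 + a12*x*y + a13*x*z + a23*y*z)
        * (c1*x^2 + c2*y^2 + c3*z^2 + c12*x*y + c13*x*z + c23*y*z)
      = 4*(x^4+y^4+z^4) - 17*(x^2*y^2+x^2*z^2+y^2*z^2) := by
    intro x y z
    rw [← hrepf x y z, ← hrepg x y z, ← map_mul, ← hfg, pn3_eval]
  obtain ⟨hB1, hE1⟩ := bin_cross (A := a1+a2+a12) (B := a13+a23) (C := a3)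
      (D := c1+c2+c12) (E := c13+c23) (F := c3)
      (fun s u => by linear_combination H s s u)
  obtain ⟨hB2, hE2⟩ := bin_cross (A := a1+a2-a12) (B := a13-a23) (C := a3)
      (D := c1+c2-c12) (E := c13-c23) (F := c3)
      (fun s u => by linear_combination H s (-s) u)
  obtain ⟨hB3, hE3⟩ := bin_cross (A := a2+a3+a23) (B := a12+a13) (C := a1)
      (D := c2+c3+c23) (E := c12+c13) (F := c1)
      (fun s u => by linear_combination H u s s)
  have ha13 : a13 = 0 := by linarith
  have ha23 : a23 = 0 := by linarith
  have ha12 : a12 = 0 := by linarith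
  have hc13 : c13 = 0 := by linarith
  have hc23 : c23 = 0 := by linarith
  have hc12 : c12 = 0 := by linarith
  have h11 : a1*c1 = 4 := by linear_combination H 1 0 0
  have h22 : a2*c2 = 4 := by linear_combination H 0 1 0
  have h33 : a3*c3 = 4 := by linear_combination H 0 0 1
  have e12 : a1*c2 + a2*c1 = -17 := by
    linear_combination H 1 1 0 - h11 - h22 - (c1+c2+c12)*ha12 - (a1+a2)*hc12
  have e13 : a1*c3 + a3*c1 = -17 := by
    linear_combination H 1 0 1 - h11 - h33 - (c1+c3+c13)*ha13 - (a1+a3)*hc13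
  have e23 : a2*c3 + a3*c2 = -17 := by
    linear_combination H 0 1 1 - h22 - h33 - (c2+c3+c23)*ha23 - (a2+a3)*hc23
  exact diag_contra h11 h22 h33 e12 e13 e23

private lemma pn3_irreducible : Irreducible (pn 3) := by
  constructor
  · exact not_isUnit_of_homog (pn_homog 3) (by norm_num) pn3_ne_zero
  · intro f g hfg
    by_contra hcon
    push_neg at hcon
    obtain ⟨hfu, hgu⟩ := hcon
    have hf0 : f ≠ 0 := by
      intro h; rw [h, zero_mul] at hfg; exact pn3_ne_zero hfg
    have hg0 : g ≠ 0 := by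
      intro h; rw [h, mul_zero] at hfg; exact pn3_ne_zero hfg
    have hph : (f * g).IsHomogeneous 4 := by rw [← hfg]; exact pn_homog 3
    obtain ⟨df, dg, hsum, hf, hg⟩ := homog_factor hf0 hg0 hph
    have hdf0 : df ≠ 0 := by
      intro h0; rw [h0] at hf; exact hfu (isUnit_of_homog_zero hf hf0)
    have hdg0 : dg ≠ 0 := by
      intro h0; rw [h0] at hg; exact hgu (isUnit_of_homog_zero hg hg0)
    rcases (by omega : df = 1 ∨ (df = 2 ∧ dg = 2) ∨ dg = 1) with h | ⟨h, h'⟩ | h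
    · exact no_lin_factor (h ▸ hf) hfg
    · exact no_quad_factor (h ▸ hf) (h' ▸ hg) hfg
    · exact no_lin_factor (h ▸ hg) (hfg.trans (mul_comm f g))

end P3

theorem pn_irreducible (n : ℕ) (hn : 3 ≤ n) : Irreducible (pn n) := by
  have hpn0 : pn n ≠ 0 := by
    intro h
    have ht := pn_transfer hn
    rw [h, map_zero] at ht
    exact pn3_ne_zero ht.symm
  constructor
  · exact not_isUnit_of_homog (pn_homog n) (by norm_num) hpn0
  · intro f g hfg
    by_contra hcon
    push_neg at hcon
    obtain ⟨hfu, hgu⟩ := hcon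
    have hf0 : f ≠ 0 := by
      intro h; rw [h, zero_mul] at hfg; exact hpn0 hfg
    have hg0 : g ≠ 0 := by
      intro h; rw [h, mul_zero] at hfg; exact hpn0 hfg
    have hph : (f * g).IsHomogeneous 4 := by rw [← hfg]; exact pn_homog n
    obtain ⟨df, dg, hsum, hf, hg⟩ := homog_factor hf0 hg0 hph
    have hdf0 : df ≠ 0 := by
      intro h0; rw [h0] at hf; exact hfu (isUnit_of_homog_zero hf hf0)
    have hdg0 : dg ≠ 0 := by
      intro h0; rw [h0] at hg; exact hgu (isUnit_of_homog_zero hg hg0)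
    have h3 : pn 3 = aeval (killq n) f * aeval (killq n) g := by
      rw [← map_mul, ← hfg, pn_transfer hn]
    have hfh : (aeval (killq n) f).IsHomogeneous df := by
      simpa using hf.aeval (killq n) killq_homog
    have hgh : (aeval (killq n) g).IsHomogeneous dg := by
      simpa using hg.aeval (killq n) killq_homog
    rcases pn3_irreducible.isUnit_or_isUnit h3 with hu | hu
    · exact not_isUnit_of_homog hfh hdf0 hu.ne_zero hu
    · exact not_isUnit_of_homog hgh hdg0 hu.ne_zero hu
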